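/- arXiv:2310.12068 — 4 statements merged into one kernel-verified Lean document; each statement's English description precedes it below -/
import Mathlib

section
/- If there exists a pathwise embedding R_k(A,a) → R_k(B,b) between tree unravellings to finite depth k, then every existential modal formula of modal depth at most k satisfied by (A,a) is satisfied by (B,b). -/
/-- A (pointed) Kripke model over a set `V` of propositional variables. -/
structure Kripke (V : Type) where
  World : Type
  R : World → World → Prop
  val : V → World → Prop
  pt : World

/-- A homomorphism of Kripke models. -/
structure KHom {V : Type} (A B : Kripke V) where
  toFun : A.World → B.World
  map_rel : ∀ x y, A.R x y → B.R (toFun x) (toFun y)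
  map_val : ∀ p x, A.val p x → B.val p (toFun x)
  map_pt : toFun A.pt = B.pt

namespace KHom

variable {V : Type} {A B C : Kripke V}

/-- Composition of homomorphisms of Kripke models. -/
def comp (g : KHom B C) (f : KHom A B) : KHom A C where
  toFun := g.toFun ∘ f.toFun
  map_rel := fun x y h => g.map_rel _ _ (f.map_rel _ _ h)
  map_val := fun p x h => g.map_val _ _ (f.map_val _ _ h)
  map_pt := by simp [f.map_pt, g.map_pt]

/-- A pathwise embedding: a homomorphism reflecting the unary predicates. -/
def Pathwise (f : KHom A B) : Prop :=
  ∀ p x, B.val p (f.toFun x) → A.val p x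

/-- An embedding: an injective homomorphism reflecting the unary predicates
and the accessibility relation. -/
def IsEmbedding (f : KHom A B) : Prop :=
  Function.Injective f.toFun ∧ f.Pathwise ∧
    ∀ x y, B.R (f.toFun x) (f.toFun y) → A.R x y

/-- A p-morphism: a pathwise embedding satisfying the back condition. -/
def IsPMorphism (f : KHom A B) : Prop :=
  f.Pathwise ∧ ∀ x y, B.R (f.toFun x) y → ∃ x', A.R x x' ∧ f.toFun x' = y

end KHom

/-- `IsPath A l x` : `l` is a finite R-path from the distinguished element of `A` to `x`. -/
def IsPath {V : Type} (A : Kripke V) (l : List A.World) (x : A.World) : Prop :=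
  l.head? = some A.pt ∧ l.getLast? = some x ∧ l.Chain' A.R

/-- A synchronization tree: every element is reachable from the distinguished
element by a unique finite path along the accessibility relation. -/
def IsSyncTree {V : Type} (A : Kripke V) : Prop :=
  ∀ x, ∃! l, IsPath A l x

/-- Height at most `k`: every path from the root makes at most `k` steps
(i.e. has at most `k+1` elements). -/
def HeightLE {V : Type} (A : Kripke V) (k : ℕ∞) : Prop :=
  ∀ l x, IsPath A l x → (l.length : ℕ∞) ≤ k + 1

/-- A path model: the elements form a finite R-chain starting at the
distinguished element, with no other R-edges. -/
def IsPathModel {V : Type} (A : Kripke V) : Prop :=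
  ∃ l : List A.World, l ≠ [] ∧ l.Nodup ∧ l.head? = some A.pt ∧ (∀ x, x ∈ l) ∧
    ∀ x y, A.R x y ↔ ∃ i, l[i]? = some x ∧ l[i + 1]? = some y

/-- Modal formulas. -/
inductive MF (V : Type) where
  | top | bot
  | var (p : V)
  | neg (φ : MF V)
  | and (φ ψ : MF V)
  | or (φ ψ : MF V)
  | box (φ : MF V)
  | dia (φ : MF V)

/-- Kripke semantics of modal formulas. -/
def Sat {V : Type} (A : Kripke V) (w : A.World) : MF V → Prop
  | .top => True
  | .bot => False
  | .var p => A.val p w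
  | .neg φ => ¬ Sat A w φ
  | .and φ ψ => Sat A w φ ∧ Sat A w ψ
  | .or φ ψ => Sat A w φ ∨ Sat A w ψ
  | .box φ => ∀ x, A.R w x → Sat A x φ
  | .dia φ => ∃ x, A.R w x ∧ Sat A x φ

/-- Modal depth: the maximal nesting of modalities. -/
def MF.depth {V : Type} : MF V → ℕ
  | .top => 0
  | .bot => 0
  | .var _ => 0
  | .neg φ => φ.depth
  | .and φ ψ => max φ.depth ψ.depth
  | .or φ ψ => max φ.depth ψ.depth
  | .box φ => φ.depth + 1
  | .dia φ => φ.depth + 1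

/-- Existential modal formulas: no `□`, negations only on propositional variables. -/
inductive MF.IsExistential {V : Type} : MF V → Prop
  | top : MF.IsExistential .top
  | bot : MF.IsExistential .bot
  | var (p : V) : MF.IsExistential (.var p)
  | negvar (p : V) : MF.IsExistential (.neg (.var p))
  | and {φ ψ} : MF.IsExistential φ → MF.IsExistential ψ → MF.IsExistential (.and φ ψ)
  | or {φ ψ} : MF.IsExistential φ → MF.IsExistential ψ → MF.IsExistential (.or φ ψ)
  | dia {φ} : MF.IsExistential φ → MF.IsExistential (.dia φ)

/-- The tree unravelling of a Kripke model to depth `k`. -/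
def Unravel {V : Type} (A : Kripke V) (k : ℕ∞) : Kripke V where
  World := { l : List A.World // l ≠ [] ∧ l.head? = some A.pt ∧ l.Chain' A.R ∧
    (l.length : ℕ∞) ≤ k + 1 }
  R s t := ∃ x, t.val = s.val ++ [x]
  val p s := ∃ x, s.val.getLast? = some x ∧ A.val p x
  pt := ⟨[A.pt], by simp, by simp, by simp [List.Chain'], by simp⟩

/-- The projection from the unravelling, sending a sequence to its last element. -/
def projFun {V : Type} (A : Kripke V) (k : ℕ∞) : (Unravel A k).World → A.World :=
  fun s => s.val.getLast s.prop.1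

lemma sat_hom {V : Type} {A B : Kripke V} (f : KHom A B) (hf : f.Pathwise) :
    ∀ φ : MF V, φ.IsExistential → ∀ w, Sat A w φ → Sat B (f.toFun w) φ := by
  intro φ hφ
  induction hφ with
  | top => intro w _; trivial
  | bot => intro w h; exact h
  | var p => intro w h; exact f.map_val p w h
  | negvar p => intro w h hb; exact h (hf p w hb)
  | and _ _ ih1 ih2 => intro w h; exact ⟨ih1 w h.1, ih2 w h.2⟩
  | or _ _ ih1 ih2 =>
      intro w h
      cases h with
      | inl h => exact Or.inl (ih1 w h)
      | inr h => exact Or.inr (ih2 w h)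
  | dia _ ih =>
      intro w h'
      obtain ⟨x, hx, hs⟩ := h'
      exact ⟨f.toFun x, f.map_rel _ _ hx, ih x hs⟩

lemma sat_proj {V : Type} (B : Kripke V) (k : ℕ∞) :
    ∀ φ : MF V, φ.IsExistential → ∀ s : (Unravel B k).World,
      Sat (Unravel B k) s φ → Sat B (s.val.getLast s.prop.1) φ := by
  intro φ hφ
  induction hφ with
  | top => intro s _; trivial
  | bot => intro s h; exact h
  | var p =>
      intro s h
      obtain ⟨x, hx, hv⟩ := h
      rw [List.getLast?_eq_getLast s.prop.1] at hx
      cases hx; exact hv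
  | negvar p =>
      intro s h hb
      exact h ⟨_, List.getLast?_eq_getLast s.prop.1, hb⟩
  | and _ _ ih1 ih2 => intro s h; exact ⟨ih1 s h.1, ih2 s h.2⟩
  | or _ _ ih1 ih2 =>
      intro s h
      cases h with
      | inl h => exact Or.inl (ih1 s h)
      | inr h => exact Or.inr (ih2 s h)
  | dia _ ih =>
      intro s h
      obtain ⟨t, ⟨x, hx⟩, hs⟩ := h
      refine ⟨t.val.getLast t.prop.1, ?_, ih t hs⟩
      have hch : t.val.Chain' B.R := t.prop.2.2.1
      rw [hx] at hch
      change List.IsChain B.R (s.val ++ [x]) at hch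
      rw [List.isChain_append] at hch
      have hR := hch.2.2 (s.val.getLast s.prop.1)
        (by rw [List.getLast?_eq_getLast s.prop.1]; exact rfl) x rfl
      have hlast : t.val.getLast t.prop.1 = x := by
        have := t.prop.1
        simp only [List.getLast_eq_iff_getLast?_eq_some, hx]
        simp
      rw [hlast]
      exact hR

lemma sat_up {V : Type} (A : Kripke V) (k : ℕ) :
    ∀ φ : MF V, φ.IsExistential → ∀ s : (Unravel A (k : ℕ∞)).World,
      φ.depth + s.val.length ≤ k + 1 →
      Sat A (s.val.getLast s.prop.1) φ → Sat (Unravel A (k : ℕ∞)) s φ := by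
  intro φ hφ
  induction hφ with
  | top => intro s _ _; trivial
  | bot => intro s _ h; exact h
  | var p =>
      intro s _ h
      exact ⟨_, List.getLast?_eq_getLast s.prop.1, h⟩
  | negvar p =>
      intro s _ h hb
      obtain ⟨x, hx, hv⟩ := hb
      rw [List.getLast?_eq_getLast s.prop.1] at hx
      cases hx; exact h hv
  | and _ _ ih1 ih2 =>
      intro s hlen h
      simp only [MF.depth] at hlen
      exact ⟨ih1 s (by omega) h.1, ih2 s (by omega) h.2⟩
  | or _ _ ih1 ih2 =>
      intro s hlen h
      simp only [MF.depth] at hlen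
      cases h with
      | inl h => exact Or.inl (ih1 s (by omega) h)
      | inr h => exact Or.inr (ih2 s (by omega) h)
  | @dia ψ _ ih =>
      intro s hlen h
      simp only [MF.depth] at hlen
      obtain ⟨x, hx, hs⟩ := h
      have hne : s.val ++ [x] ≠ [] := by simp
      have hhead : (s.val ++ [x]).head? = some A.pt := by
        rw [List.head?_append_of_ne_nil _ s.prop.1]; exact s.prop.2.1
      have hch : (s.val ++ [x]).Chain' A.R := by
        change List.IsChain A.R (s.val ++ [x])
        rw [List.isChain_append]
        refine ⟨s.prop.2.2.1, List.isChain_singleton x, ?_⟩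
        intro a ha b hb
        rw [List.getLast?_eq_getLast s.prop.1, Option.mem_def,
          Option.some.injEq] at ha
        simp only [List.head?_cons, Option.mem_def, Option.some.injEq] at hb
        subst ha; subst hb; exact hx
      have hlen2 : (((s.val ++ [x]).length : ℕ) : ℕ∞) ≤ (k : ℕ∞) + 1 := by
        simp only [List.length_append, List.length_singleton]
        exact_mod_cast (show s.val.length + 1 ≤ k + 1 by omega)
      refine ⟨⟨s.val ++ [x], hne, hhead, hch, hlen2⟩, ⟨x, rfl⟩,
        ih ⟨s.val ++ [x], hne, hhead, hch, hlen2⟩ ?_ ?_⟩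
      · show ψ.depth + (s.val ++ [x]).length ≤ k + 1
        simp only [List.length_append, List.length_singleton]; omega
      · have hl : (s.val ++ [x]).getLast hne = x := by
          simp only [List.getLast_eq_iff_getLast?_eq_some]
          simp
        rw [hl]; exact hs

/-- If there exists a pathwise embedding `R_k A → R_k B` between tree
unravellings to finite depth `k`, then every existential modal formula of depth at
most `k` satisfied by `A` is satisfied by `B`. -/
theorem stmt10 {V : Type} (k : ℕ) (A B : Kripke V)
    (h : ∃ f : KHom (Unravel A (k : ℕ∞)) (Unravel B (k : ℕ∞)), f.Pathwise) :
    ∀ φ : MF V, φ.IsExistential → φ.depth ≤ k → Sat A A.pt φ → Sat B B.pt φ := by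
  obtain ⟨f, hf⟩ := h
  intro φ hφ hd hA
  have h1 : Sat (Unravel A (k : ℕ∞)) (Unravel A (k : ℕ∞)).pt φ := by
    apply sat_up A k φ hφ
    · show φ.depth + ([A.pt]).length ≤ k + 1
      simp only [List.length_singleton]; omega
    · show Sat A ([A.pt].getLast (by simp)) φ
      simpa using hA
  have h2 := sat_hom f hf φ hφ _ h1
  rw [f.map_pt] at h2
  have h3 := sat_proj B (k : ℕ∞) φ hφ _ h2
  simpa [Unravel] using h3
end

section
/- The poset P_k of paths of height at most k ordered by embedding is a forest: for every path P, the set of paths embedding into P is linearly ordered by embeddability. -/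
private lemma nodup_idx {α : Type*} {l : List α} (h : l.Nodup) {i j : ℕ} {x : α}
    (hi : l[i]? = some x) (hj : l[j]? = some x) : i = j := by
  obtain ⟨hi', hix⟩ := List.getElem?_eq_some_iff.1 hi
  obtain ⟨hj', hjx⟩ := List.getElem?_eq_some_iff.1 hj
  exact (h.getElem_inj_iff (hi := hi') (hj := hj')).1 (by rw [hix, hjx])

/-- Key lemma: a homomorphism from a chain-model into a chain-model sends the
`i`-th element to the `i`-th element. -/
private lemma key_idx {V : Type} {Q P : Kripke V} (f : KHom Q P)
    (lQ : List Q.World) (hQh : lQ.head? = some Q.pt)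
    (hQR : ∀ x y, Q.R x y ↔ ∃ i, lQ[i]? = some x ∧ lQ[i + 1]? = some y)
    (lP : List P.World) (hPnd : lP.Nodup) (hPh : lP.head? = some P.pt)
    (hPR : ∀ x y, P.R x y ↔ ∃ i, lP[i]? = some x ∧ lP[i + 1]? = some y) :
    ∀ (i : ℕ) (x : Q.World), lQ[i]? = some x → lP[i]? = some (f.toFun x) := by
  intro i
  induction i with
  | zero =>
    intro x hx
    rw [List.head?_eq_getElem?] at hQh hPh
    rw [hQh] at hx
    cases hx
    rw [hPh, f.map_pt]
  | succ i ih =>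
    intro x hx
    have hlt : i < lQ.length := by
      have := (List.getElem?_eq_some_iff.1 hx).1; omega
    have hy : lQ[i]? = some lQ[i] := List.getElem?_eq_getElem hlt
    have hR : Q.R lQ[i] x := (hQR _ _).2 ⟨i, hy, hx⟩
    obtain ⟨j, hj1, hj2⟩ := (hPR _ _).1 (f.map_rel _ _ hR)
    have hji : j = i := nodup_idx hPnd hj1 (ih _ hy)
    subst hji
    exact hj2

/-- Main construction: if two path models embed into a common path model `P`
and the first underlying list is no longer than the second, then the first
path embeds into the second. -/
private lemma build_emb {V : Type} {P Q₁ Q₂ : Kripke V}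
    (lP : List P.World) (hPnd : lP.Nodup) (hPh : lP.head? = some P.pt)
    (hPR : ∀ x y, P.R x y ↔ ∃ i, lP[i]? = some x ∧ lP[i + 1]? = some y)
    (l₁ : List Q₁.World) (h₁nd : l₁.Nodup) (h₁h : l₁.head? = some Q₁.pt)
    (h₁m : ∀ x, x ∈ l₁)
    (h₁R : ∀ x y, Q₁.R x y ↔ ∃ i, l₁[i]? = some x ∧ l₁[i + 1]? = some y)
    (l₂ : List Q₂.World) (h₂nd : l₂.Nodup) (h₂h : l₂.head? = some Q₂.pt)
    (h₂R : ∀ x y, Q₂.R x y ↔ ∃ i, l₂[i]? = some x ∧ l₂[i + 1]? = some y)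
    (f₁ : KHom Q₁ P) (hf₁ : f₁.IsEmbedding)
    (f₂ : KHom Q₂ P) (hf₂ : f₂.IsEmbedding)
    (hlen : l₁.length ≤ l₂.length) :
    ∃ g : KHom Q₁ Q₂, g.IsEmbedding := by
  have spec : ∀ x : Q₁.World, ∃ y : Q₂.World, ∃ i : ℕ, l₁[i]? = some x ∧ l₂[i]? = some y := by
    intro x
    obtain ⟨i, hi⟩ := List.mem_iff_getElem?.1 (h₁m x)
    have hlt : i < l₂.length :=
      lt_of_lt_of_le (List.getElem?_eq_some_iff.1 hi).1 hlen
    exact ⟨l₂[i], i, hi, List.getElem?_eq_getElem hlt⟩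
  choose g hg using spec
  -- the defining property of g, stated for arbitrary indices
  have gprop : ∀ (x : Q₁.World) (i : ℕ), l₁[i]? = some x → l₂[i]? = some (g x) := by
    intro x i hi
    obtain ⟨j, hj1, hj2⟩ := hg x
    cases nodup_idx h₁nd hi hj1
    exact hj2
  have k₁ := key_idx f₁ l₁ h₁h h₁R lP hPnd hPh hPR
  have k₂ := key_idx f₂ l₂ h₂h h₂R lP hPnd hPh hPR
  -- f₂ ∘ g = f₁
  have heq : ∀ x, f₂.toFun (g x) = f₁.toFun x := by
    intro x
    obtain ⟨i, hi⟩ := List.mem_iff_getElem?.1 (h₁m x)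
    have h1 := k₁ i x hi
    have h2 := k₂ i (g x) (gprop x i hi)
    rw [h1] at h2
    exact Option.some.inj h2.symm
  refine ⟨⟨g, ?_, ?_, ?_⟩, ?_, ?_, ?_⟩
  · -- map_rel
    intro x y hR
    obtain ⟨i, hi1, hi2⟩ := (h₁R _ _).1 hR
    exact (h₂R _ _).2 ⟨i, gprop x i hi1, gprop y (i + 1) hi2⟩
  · -- map_val
    intro p x hv
    exact hf₂.2.1 p (g x) (by rw [heq]; exact f₁.map_val p x hv)
  · -- map_pt
    have h0 : l₂[0]? = some (g Q₁.pt) := gprop Q₁.pt 0 (by rwa [← List.head?_eq_getElem?])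
    rw [List.head?_eq_getElem?, h0] at h₂h
    exact Option.some.inj h₂h
  · -- injective
    intro x y hxy
    obtain ⟨i, hi⟩ := List.mem_iff_getElem?.1 (h₁m x)
    obtain ⟨j, hj⟩ := List.mem_iff_getElem?.1 (h₁m y)
    have hxy' : g x = g y := hxy
    have : i = j := nodup_idx h₂nd (gprop x i hi) (hxy' ▸ gprop y j hj)
    subst this
    rw [hi] at hj
    exact Option.some.inj hj
  · -- pathwise
    intro p x hv
    have := f₂.map_val p (g x) hv
    rw [heq] at this
    exact hf₁.2.1 p x this
  · -- reflects R
    intro x y hR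
    obtain ⟨j, hj1, hj2⟩ := (h₂R _ _).1 hR
    obtain ⟨i, hi⟩ := List.mem_iff_getElem?.1 (h₁m x)
    obtain ⟨i', hi'⟩ := List.mem_iff_getElem?.1 (h₁m y)
    have e1 : i = j := nodup_idx h₂nd (gprop x i hi) hj1
    have e2 : i' = j + 1 := nodup_idx h₂nd (gprop y i' hi') hj2
    exact (h₁R _ _).2 ⟨j, e1 ▸ hi, e2 ▸ hi'⟩

/-- The poset `P_k` of paths of height at most `k` ordered by embedding
is a forest: the paths embedding into a given path are linearly ordered by
embeddability. -/
theorem stmt14 {V : Type} (k : ℕ∞) (P Q₁ Q₂ : Kripke V)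
    (hP : IsPathModel P) (hPk : HeightLE P k)
    (hQ₁ : IsPathModel Q₁) (hQ₁k : HeightLE Q₁ k)
    (hQ₂ : IsPathModel Q₂) (hQ₂k : HeightLE Q₂ k)
    (f₁ : KHom Q₁ P) (hf₁ : f₁.IsEmbedding)
    (f₂ : KHom Q₂ P) (hf₂ : f₂.IsEmbedding) :
    (∃ g : KHom Q₁ Q₂, g.IsEmbedding) ∨ (∃ g : KHom Q₂ Q₁, g.IsEmbedding) := by
  obtain ⟨lP, -, hPnd, hPh, -, hPR⟩ := hP
  obtain ⟨l₁, -, h₁nd, h₁h, h₁m, h₁R⟩ := hQ₁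
  obtain ⟨l₂, -, h₂nd, h₂h, h₂m, h₂R⟩ := hQ₂
  rcases le_total l₁.length l₂.length with hle | hle
  · exact Or.inl (build_emb lP hPnd hPh hPR l₁ h₁nd h₁h h₁m h₁R l₂ h₂nd h₂h h₂R f₁ hf₁ f₂ hf₂ hle)
  · exact Or.inr (build_emb lP hPnd hPh hPR l₂ h₂nd h₂h h₂m h₂R l₁ h₁nd h₁h h₁R f₂ hf₂ f₁ hf₁ hle)
end

section
/- Factorisation through: every pathwise embedding f : A → B between synchronization trees of height at most k factors as f = t ∘ j where j : A → X is an embedding, t : X → B is a surjective p-morphism, and X is a synchronization tree of height at most k; moreover X can be chosen finite if A and B are finite. -/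
namespace SyncAux

variable {V : Type} {A B : Kripke V}

lemma IsPathAux.ne_nil {l : List A.World} {x : A.World} (h : IsPath A l x) : l ≠ [] := by
  intro e; subst e; simp [IsPath] at h

lemma isPath_singleton : IsPath A [A.pt] A.pt := ⟨rfl, rfl, List.isChain_singleton _⟩

lemma isPath_extend {l : List A.World} {x y : A.World} (h : IsPath A l x) (hr : A.R x y) :
    IsPath A (l ++ [y]) y := by
  obtain ⟨h1, h2, h3⟩ := h
  refine ⟨?_, ?_, ?_⟩
  · rw [List.head?_append, h1]; rfl
  · exact List.getLast?_concat
  · rw [List.Chain', List.isChain_append]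
    refine ⟨h3, List.isChain_singleton _, ?_⟩
    intro a ha b hb
    simp only [List.head?_cons, Option.mem_def, Option.some.injEq] at hb
    rw [h2] at ha
    simp only [Option.mem_def, Option.some.injEq] at ha
    subst ha; subst hb; exact hr

lemma isPath_decompose {l : List A.World} {z : A.World} (hl : l ≠ [])
    (h : IsPath A (l ++ [z]) z) :
    IsPath A l (l.getLast hl) ∧ A.R (l.getLast hl) z := by
  obtain ⟨h1, h2, h3⟩ := h
  rw [List.Chain', List.isChain_append] at h3
  obtain ⟨hc1, _, hc3⟩ := h3
  have hrel : A.R (l.getLast hl) z := by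
    apply hc3
    · rw [List.getLast?_eq_getLast hl]; rfl
    · rfl
  refine ⟨⟨?_, List.getLast?_eq_getLast hl, hc1⟩, hrel⟩
  · rw [List.head?_append, List.head?_eq_head hl] at h1
    rw [List.head?_eq_head hl]
    simpa using h1

/-- The unique path to an element of a synchronization tree. -/
noncomputable def pathTo (hA : IsSyncTree A) (x : A.World) : List A.World :=
  (hA x).exists.choose

lemma isPath_pathTo (hA : IsSyncTree A) (x : A.World) : IsPath A (pathTo hA x) x :=
  (hA x).exists.choose_spec

lemma pathTo_unique (hA : IsSyncTree A) {l : List A.World} {x : A.World}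
    (h : IsPath A l x) : l = pathTo hA x :=
  (hA x).unique h (isPath_pathTo hA x)

lemma pathTo_ne_nil (hA : IsSyncTree A) (x : A.World) : pathTo hA x ≠ [] :=
  IsPathAux.ne_nil (isPath_pathTo hA x)

lemma pathTo_length_pos (hA : IsSyncTree A) (x : A.World) : 1 ≤ (pathTo hA x).length :=
  List.length_pos_iff.2 (pathTo_ne_nil hA x)

lemma pathTo_getLast (hA : IsSyncTree A) (x : A.World) :
    (pathTo hA x).getLast (pathTo_ne_nil hA x) = x := by
  have := (isPath_pathTo hA x).2.1
  rw [List.getLast?_eq_getLast (pathTo_ne_nil hA x)] at this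
  exact Option.some.inj this

lemma pathTo_pt (hA : IsSyncTree A) : pathTo hA A.pt = [A.pt] :=
  (pathTo_unique hA isPath_singleton).symm

lemma pathTo_rel (hA : IsSyncTree A) {x y : A.World} (h : A.R x y) :
    pathTo hA y = pathTo hA x ++ [y] :=
  (pathTo_unique hA (isPath_extend (isPath_pathTo hA x) h)).symm

lemma isPath_length_one {l : List A.World} {y : A.World} (h : IsPath A l y)
    (hlen : l.length = 1) : l = [y] ∧ y = A.pt := by
  obtain ⟨c, rfl⟩ : ∃ c, l = [c] := by
    match l, hlen with
    | [c], _ => exact ⟨c, rfl⟩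
  obtain ⟨h1, h2, _⟩ := h
  simp only [List.head?_cons, Option.some.injEq] at h1
  simp only [List.getLast?_singleton, Option.some.injEq] at h2
  subst h2; exact ⟨rfl, h1⟩

/-- Criterion for being a synchronization tree via a depth function. -/
lemma treeCrit (X : Kripke V) (d : X.World → ℕ)
    (hpt : d X.pt = 1) (hpos : ∀ x, 1 ≤ d x)
    (hstep : ∀ x y, X.R x y → d y = d x + 1)
    (hpar_ex : ∀ y, y ≠ X.pt → ∃ x, X.R x y)
    (hpar_uniq : ∀ x x' y, X.R x y → X.R x' y → x = x') :
    IsSyncTree X ∧ ∀ l y, IsPath X l y → l.length = d y := by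
  have hlen : ∀ l (y : X.World), IsPath X l y → l.length = d y := by
    intro l
    induction l using List.reverseRecOn with
    | nil => intro y h; exact absurd rfl (IsPathAux.ne_nil h)
    | append_singleton l a ih =>
      intro y h
      have ha : a = y := by
        have := h.2.1
        rw [List.getLast?_concat] at this
        exact Option.some.inj this
      subst ha
      rcases eq_or_ne l [] with rfl | hl
      · obtain ⟨_, hpt'⟩ := isPath_length_one h (by simp)
        simp [hpt', hpt]
      · obtain ⟨hp, hrel⟩ := isPath_decompose hl h
        rw [List.length_append, List.length_singleton, ih _ hp, (hstep _ _ hrel)]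
  refine ⟨?_, hlen⟩
  have key : ∀ n (y : X.World), d y = n → ∃! l, IsPath X l y := by
    intro n
    induction n using Nat.strong_induction_on with
    | _ n ih =>
      intro y hdy
      by_cases hy : y = X.pt
      · subst hy
        refine ⟨[X.pt], isPath_singleton, ?_⟩
        intro l hl
        have h1 : l.length = 1 := by rw [hlen l _ hl, hpt]
        exact (isPath_length_one hl h1).1
      · obtain ⟨x, hx⟩ := hpar_ex y hy
        have hdx : d y = d x + 1 := hstep _ _ hx
        obtain ⟨m, hm, hmu⟩ := ih (d x) (by omega) x rfl
        refine ⟨m ++ [y], isPath_extend hm hx, ?_⟩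
        intro l hl
        have hlong : l.length ≠ 1 := by
          intro h1
          exact hy (isPath_length_one hl h1).2
        have hlnil : l ≠ [] := IsPathAux.ne_nil hl
        have hlast : l.getLast hlnil = y := by
          have := hl.2.1
          rw [List.getLast?_eq_getLast hlnil] at this
          exact Option.some.inj this
        have hdec : l = l.dropLast ++ [y] := by
          conv_lhs => rw [← List.dropLast_append_getLast hlnil]
          rw [hlast]
        have hdnil : l.dropLast ≠ [] := by
          intro e
          rw [hdec, e] at hlong
          simp at hlong
        have hl' : IsPath X (l.dropLast ++ [y]) y := hdec ▸ hl
        obtain ⟨hp, hrel⟩ := isPath_decompose hdnil hl'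
        have hxeq : l.dropLast.getLast hdnil = x := hpar_uniq _ _ _ hrel hx
        rw [hxeq] at hp
        rw [hdec, hmu _ hp]
  exact fun y => key (d y) y rfl


lemma parent_unique (hA : IsSyncTree A) {x x' y : A.World}
    (h : A.R x y) (h' : A.R x' y) : x = x' := by
  have h1 := pathTo_rel hA h
  have h2 := pathTo_rel hA h'
  have heq : pathTo hA x = pathTo hA x' := by
    apply List.append_cancel_right (bs := [y])
    rw [← h1, ← h2]
  calc x = (pathTo hA x).getLast (pathTo_ne_nil hA x) := (pathTo_getLast hA x).symm
    _ = (pathTo hA x').getLast (pathTo_ne_nil hA x') := by congr 1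
    _ = x' := pathTo_getLast hA x'

lemma isPath_tail_decompose {l : List A.World} {y : A.World} (h : IsPath A l y)
    (hy : y ≠ A.pt) :
    ∃ (l' : List A.World) (h' : l' ≠ []),
      l = l' ++ [y] ∧ IsPath A l' (l'.getLast h') ∧ A.R (l'.getLast h') y := by
  have hlnil : l ≠ [] := IsPathAux.ne_nil h
  have hlast : l.getLast hlnil = y := by
    have := h.2.1
    rw [List.getLast?_eq_getLast hlnil] at this
    exact Option.some.inj this
  have hlen1 : l.length ≠ 1 := fun h1 => hy (isPath_length_one h h1).2
  have hdec : l = l.dropLast ++ [y] := by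
    conv_lhs => rw [← List.dropLast_append_getLast hlnil]
    rw [hlast]
  have hdnil : l.dropLast ≠ [] := by
    intro e
    rw [hdec, e] at hlen1
    simp at hlen1
  obtain ⟨hp, hr⟩ := isPath_decompose hdnil (hdec ▸ h)
  exact ⟨l.dropLast, hdnil, hdec, hp, hr⟩

lemma exists_parent (hA : IsSyncTree A) {x : A.World} (hx : x ≠ A.pt) :
    ∃ z, A.R z x := by
  obtain ⟨l', h', _, _, hr⟩ := isPath_tail_decompose (isPath_pathTo hA x) hx
  exact ⟨_, hr⟩

lemma ne_pt_of_one_lt (hA : IsSyncTree A) {x : A.World}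
    (h : 1 < (pathTo hA x).length) : x ≠ A.pt := by
  intro e; subst e
  rw [pathTo_pt hA] at h
  simp at h

lemma one_lt_of_ne_pt (hA : IsSyncTree A) {x : A.World} (h : x ≠ A.pt) :
    1 < (pathTo hA x).length := by
  rcases Nat.lt_or_ge 1 (pathTo hA x).length with h1 | h1
  · exact h1
  · have := pathTo_length_pos hA x
    have hlen : (pathTo hA x).length = 1 := le_antisymm h1 this
    exact absurd (isPath_length_one (isPath_pathTo hA x) hlen).2 h

lemma KHom.ext' {A B : Kripke V} {f g : KHom A B} (h : f.toFun = g.toFun) : f = g := by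
  cases f; cases g; cases h; rfl

section Construction

variable (hA : IsSyncTree A) (hB : IsSyncTree B) (f : KHom A B)

/-- The factorisation model. -/
noncomputable def XK : Kripke V where
  World := A.World ⊕ {p : A.World × B.World //
    pathTo hB (f.toFun p.1) <+: pathTo hB p.2 ∧
      (pathTo hB (f.toFun p.1)).length < (pathTo hB p.2).length}
  R x y :=
    match x, y with
    | .inl a, .inl a' => A.R a a'
    | .inl a, .inr q => a = q.val.1 ∧ B.R (f.toFun a) q.val.2
    | .inr p, .inr q => p.val.1 = q.val.1 ∧ B.R p.val.2 q.val.2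
    | .inr _, .inl _ => False
  val p x :=
    match x with
    | .inl a => A.val p a
    | .inr q => B.val p q.val.2
  pt := .inl A.pt

lemma pathTo_map (a : A.World) :
    pathTo hB (f.toFun a) = (pathTo hA a).map f.toFun := by
  symm
  apply pathTo_unique
  obtain ⟨h1, h2, h3⟩ := isPath_pathTo hA a
  refine ⟨?_, ?_, ?_⟩
  · rw [List.head?_map, h1, Option.map_some, f.map_pt]
  · rw [List.getLast?_map, h2, Option.map_some]
  · rw [List.Chain', List.isChain_map]
    exact List.IsChain.imp (fun a b hab => f.map_rel a b hab) h3


/-- The embedding into the factorisation model. -/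
def jH : KHom A (XK hB f) where
  toFun := Sum.inl
  map_rel := fun _ _ h => h
  map_val := fun _ _ h => h
  map_pt := rfl

/-- The p-morphism out of the factorisation model. -/
def tH : KHom (XK hB f) B where
  toFun := fun x => match x with | .inl a => f.toFun a | .inr q => q.val.2
  map_rel := by
    rintro (a | p) (a' | q) h
    · exact f.map_rel _ _ h
    · exact h.2
    · exact h.elim
    · exact h.2
  map_val := by
    rintro p (a | q) h
    · exact f.map_val _ _ h
    · exact h
  map_pt := f.map_pt

/-- Depth function on the factorisation model. -/
noncomputable def dX : (XK hB f).World → ℕ := fun x =>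
  match x with
  | .inl a => (pathTo hA a).length
  | .inr q => (pathTo hB q.val.2).length

end Construction

lemma main (hA : IsSyncTree A) (hB : IsSyncTree B) (f : KHom A B)
    (hf : f.Pathwise) (k : ℕ∞) (hAk : HeightLE A k) (hBk : HeightLE B k) :
    ∃ (j : KHom A (XK hB f)) (t : KHom (XK hB f) B),
      IsSyncTree (XK hB f) ∧ HeightLE (XK hB f) k ∧ j.IsEmbedding ∧ t.IsPMorphism ∧
        Function.Surjective t.toFun ∧ t.comp j = f := by
  classical
  have hpt : dX hA hB f (XK hB f).pt = 1 := by
    show (pathTo hA A.pt).length = 1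
    rw [pathTo_pt hA]; rfl
  have hpos : ∀ x, 1 ≤ dX hA hB f x := by
    rintro (a | q)
    · exact pathTo_length_pos hA a
    · exact pathTo_length_pos hB q.val.2
  have hstep : ∀ x y, (XK hB f).R x y → dX hA hB f y = dX hA hB f x + 1 := by
    rintro (a | p) (a' | q) h
    · show (pathTo hA a').length = (pathTo hA a).length + 1
      rw [pathTo_rel hA h]; simp
    · show (pathTo hB q.val.2).length = (pathTo hA a).length + 1
      rw [pathTo_rel hB h.2, pathTo_map hA hB f a]; simp
    · exact h.elim
    · show (pathTo hB q.val.2).length = (pathTo hB p.val.2).length + 1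
      rw [pathTo_rel hB h.2]; simp
  have hex : ∀ y, y ≠ (XK hB f).pt → ∃ x, (XK hB f).R x y := by
    rintro (a | q) hy
    · have ha : a ≠ A.pt := fun e => hy (by rw [e]; rfl)
      obtain ⟨z, hz⟩ := exists_parent hA ha
      exact ⟨.inl z, hz⟩
    · obtain ⟨⟨a, b⟩, hpre, hlt⟩ := q
      replace hpre : pathTo hB (f.toFun a) <+: pathTo hB b := hpre
      replace hlt : (pathTo hB (f.toFun a)).length < (pathTo hB b).length := hlt
      have hbpt : b ≠ B.pt :=
        ne_pt_of_one_lt hB (lt_of_le_of_lt (pathTo_length_pos hB (f.toFun a)) hlt)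
      obtain ⟨l', h', hdec, hp', hr'⟩ := isPath_tail_decompose (isPath_pathTo hB b) hbpt
      have hl'path : pathTo hB (l'.getLast h') = l' := (pathTo_unique hB hp').symm
      have hpre2 : pathTo hB (f.toFun a) <+: l' ++ [b] := by rw [← hdec]; exact hpre
      have hprefix' : pathTo hB (f.toFun a) <+: l' := by
        rcases List.prefix_concat_iff.1 hpre2 with he | hp
        · exfalso
          have e1 : (pathTo hB (f.toFun a)).length = l'.length + 1 := by rw [he]; simp
          have e2 : (pathTo hB b).length = l'.length + 1 := by rw [hdec]; simp
          omega
        · exact hp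
      rcases eq_or_lt_of_le (List.IsPrefix.length_le hprefix') with heq | hlt2
      · have hEq : pathTo hB (f.toFun a) = l' := List.IsPrefix.eq_of_length hprefix' heq
        have hfa : f.toFun a = l'.getLast h' := by
          have h1 := (isPath_pathTo hB (f.toFun a)).2.1
          rw [hEq, List.getLast?_eq_getLast h'] at h1
          exact (Option.some.inj h1).symm
        refine ⟨.inl a, rfl, ?_⟩
        have hgoal : B.R (f.toFun a) b := by rw [hfa]; exact hr'
        exact hgoal
      · refine ⟨.inr ⟨(a, l'.getLast h'), ?_, ?_⟩, rfl, hr'⟩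
        · rw [hl'path]; exact hprefix'
        · rw [hl'path]; exact hlt2
  have huniq : ∀ x x' y, (XK hB f).R x y → (XK hB f).R x' y → x = x' := by
    rintro (a1 | p1) (a2 | p2) (a | q) h h'
    · exact congrArg Sum.inl (parent_unique hA h h')
    · exact congrArg Sum.inl (h.1.trans h'.1.symm)
    · exact h'.elim
    · exfalso
      have hpar := parent_unique hB h.2 h'.2
      have hm : (pathTo hB (f.toFun p2.val.1)).length < (pathTo hB p2.val.2).length :=
        p2.prop.2
      rw [h'.1, ← h.1, hpar] at hm
      exact lt_irrefl _ hm
    · exact h.elim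
    · exfalso
      have hpar := parent_unique hB h'.2 h.2
      have hm : (pathTo hB (f.toFun p1.val.1)).length < (pathTo hB p1.val.2).length :=
        p1.prop.2
      rw [h.1, ← h'.1, hpar] at hm
      exact lt_irrefl _ hm
    · exact h.elim
    · have hb : p1.val.2 = p2.val.2 := parent_unique hB h.2 h'.2
      have ha : p1.val.1 = p2.val.1 := h.1.trans h'.1.symm
      exact congrArg Sum.inr (Subtype.ext (Prod.ext ha hb))
  obtain ⟨hsync, hlenEq⟩ := treeCrit (XK hB f) (dX hA hB f) hpt hpos hstep hex huniq
  have hheight : HeightLE (XK hB f) k := by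
    intro l y hl
    rw [hlenEq l y hl]
    rcases y with a | q
    · exact hAk _ _ (isPath_pathTo hA a)
    · exact hBk _ _ (isPath_pathTo hB q.val.2)
  have hemb : (jH hB f).IsEmbedding :=
    ⟨fun _ _ h => Sum.inl_injective h, fun _ _ h => h, fun _ _ h => h⟩
  have hpm : (tH hB f).IsPMorphism := by
    constructor
    · rintro p (a | q) h
      · exact hf p a h
      · exact h
    · rintro (a | p) y h
      · replace h : B.R (f.toFun a) y := h
        refine ⟨.inr ⟨(a, y), ?_, ?_⟩, ⟨rfl, h⟩, rfl⟩
        · rw [pathTo_rel hB h]; exact List.prefix_append _ _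
        · rw [pathTo_rel hB h]; simp
      · replace h : B.R p.val.2 y := h
        refine ⟨.inr ⟨(p.val.1, y), ?_, ?_⟩, ⟨rfl, h⟩, rfl⟩
        · rw [pathTo_rel hB h]
          exact p.prop.1.trans (List.prefix_append _ _)
        · rw [pathTo_rel hB h]
          simp only [List.length_append, List.length_singleton]
          exact Nat.lt_succ_of_lt p.prop.2
  have hsurj : Function.Surjective (tH hB f).toFun := by
    intro b
    by_cases hb : b = B.pt
    · refine ⟨.inl A.pt, ?_⟩
      show f.toFun A.pt = b
      rw [f.map_pt, hb]
    · have h2 : 1 < (pathTo hB b).length := one_lt_of_ne_pt hB hb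
      have hpre : pathTo hB (f.toFun A.pt) <+: pathTo hB b := by
        rw [f.map_pt, pathTo_pt hB]
        obtain ⟨tl, htl⟩ := List.head?_eq_some_iff.1 (isPath_pathTo hB b).1
        rw [htl]
        exact ⟨tl, rfl⟩
      refine ⟨.inr ⟨(A.pt, b), hpre, ?_⟩, rfl⟩
      rw [f.map_pt, pathTo_pt hB]
      simpa using h2
  have hcomp : (tH hB f).comp (jH hB f) = f := KHom.ext' rfl
  exact ⟨jH hB f, tH hB f, hsync, hheight, hemb, hpm, hsurj, hcomp⟩



end SyncAux

/-- Factorisation-through: every pathwise embedding `f : A → B` between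
synchronization trees of height at most `k` factors as an embedding followed by a
surjective p-morphism through a synchronization tree of height at most `k`;
moreover `X` can be chosen finite if `A` and `B` are finite. -/
theorem stmt16 {V : Type} (k : ℕ∞) (A B : Kripke V)
    (hA : IsSyncTree A) (hAk : HeightLE A k) (hB : IsSyncTree B) (hBk : HeightLE B k)
    (f : KHom A B) (hf : f.Pathwise) :
    (∃ (X : Kripke V) (j : KHom A X) (t : KHom X B),
      IsSyncTree X ∧ HeightLE X k ∧ j.IsEmbedding ∧ t.IsPMorphism ∧
        Function.Surjective t.toFun ∧ t.comp j = f) ∧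
    (Finite A.World → Finite B.World →
      ∃ (X : Kripke V) (j : KHom A X) (t : KHom X B),
        Finite X.World ∧ IsSyncTree X ∧ HeightLE X k ∧ j.IsEmbedding ∧ t.IsPMorphism ∧
          Function.Surjective t.toFun ∧ t.comp j = f) := by
  obtain ⟨j, t, h1, h2, h3, h4, h5, h6⟩ := SyncAux.main hA hB f hf k hAk hBk
  refine ⟨⟨_, j, t, h1, h2, h3, h4, h5, h6⟩, ?_⟩
  intro hFA hFB
  have hfin : Finite (SyncAux.XK hB f).World := by
    dsimp only [SyncAux.XK]
    infer_instance
  exact ⟨_, j, t, hfin, h1, h2, h3, h4, h5, h6⟩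
end

section
/- Łoś–Tarski theorem for modal logic: a modal formula of modal depth at most k is preserved under embeddings of Kripke models if and only if it is logically equivalent to an existential modal formula of depth at most k. -/
attribute [local instance] Classical.propDecidable

namespace LT
variable {V : Type}

def MF.varsL : MF V → List V
  | .top | .bot => []
  | .var p => [p]
  | .neg φ => MF.varsL φ
  | .and φ ψ | .or φ ψ => MF.varsL φ ++ MF.varsL ψ
  | .box φ | .dia φ => MF.varsL φ

def listAnd (L : List (MF V)) : MF V := L.foldr .and .top
def listOr (L : List (MF V)) : MF V := L.foldr .or .bot

lemma sat_listAnd (A : Kripke V) (w : A.World) (L : List (MF V)) :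
    Sat A w (listAnd L) ↔ ∀ χ ∈ L, Sat A w χ := by
  induction L with
  | nil => simp [listAnd, Sat]
  | cons a L ih =>
    show Sat A w (.and a (listAnd L)) ↔ _
    simp only [Sat, ih]
    simp

lemma sat_listOr (A : Kripke V) (w : A.World) (L : List (MF V)) :
    Sat A w (listOr L) ↔ ∃ χ ∈ L, Sat A w χ := by
  induction L with
  | nil => simp [listOr, Sat]
  | cons a L ih =>
    show Sat A w (.or a (listOr L)) ↔ _
    simp only [Sat, ih]
    simp

lemma depth_listAnd (L : List (MF V)) (k : ℕ) (h : ∀ χ ∈ L, MF.depth χ ≤ k) :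
    (listAnd L).depth ≤ k := by
  induction L with
  | nil => simp [listAnd, MF.depth]
  | cons a L ih =>
    simp only [listAnd, List.foldr, MF.depth, max_le_iff]
    exact ⟨h a (by simp), ih fun χ hχ => h χ (by simp [hχ])⟩

lemma depth_listOr (L : List (MF V)) (k : ℕ) (h : ∀ χ ∈ L, MF.depth χ ≤ k) :
    (listOr L).depth ≤ k := by
  induction L with
  | nil => simp [listOr, MF.depth]
  | cons a L ih =>
    simp only [listOr, List.foldr, MF.depth, max_le_iff]
    exact ⟨h a (by simp), ih fun χ hχ => h χ (by simp [hχ])⟩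

lemma ex_listAnd (L : List (MF V)) (h : ∀ χ ∈ L, MF.IsExistential χ) :
    (listAnd L).IsExistential := by
  induction L with
  | nil => exact .top
  | cons a L ih => exact .and (h a (by simp)) (ih fun χ hχ => h χ (by simp [hχ]))

lemma ex_listOr (L : List (MF V)) (h : ∀ χ ∈ L, MF.IsExistential χ) :
    (listOr L).IsExistential := by
  induction L with
  | nil => exact .bot
  | cons a L ih => exact .or (h a (by simp)) (ih fun χ hχ => h χ (by simp [hχ]))

def TypeS (n : ℕ) : ℕ → Type
  | 0 => Fin n → Prop
  | k+1 => (Fin n → Prop) × Set (TypeS n k)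

noncomputable instance ftTypeS (n : ℕ) : ∀ k, Fintype (TypeS n k)
  | 0 => inferInstanceAs (Fintype (Fin n → Prop))
  | k+1 =>
    haveI := ftTypeS n k
    inferInstanceAs (Fintype ((Fin n → Prop) × Set (TypeS n k)))

variable {n : ℕ} (vec : Fin n → V)

def wtype (A : Kripke V) : (k : ℕ) → A.World → TypeS n k
  | 0, w => fun i => A.val (vec i) w
  | k+1, w => ⟨fun i => A.val (vec i) w, { t | ∃ x, A.R w x ∧ wtype A k x = t }⟩

def tle : (k : ℕ) → TypeS n k → TypeS n k → Prop
  | 0, s, t => s = t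
  | k+1, s, t => s.1 = t.1 ∧ ∀ u ∈ s.2, ∃ v ∈ t.2, tle k u v

lemma tle_refl : ∀ k (t : TypeS n k), tle k t t
  | 0, _ => rfl
  | k+1, t => ⟨rfl, fun u hu => ⟨u, hu, tle_refl k u⟩⟩

lemma tle_val {A B : Kripke V} {a : A.World} {b : B.World} :
    ∀ k, tle k (wtype vec A k a) (wtype vec B k b) →
      ∀ i, A.val (vec i) a ↔ B.val (vec i) b
  | 0, h, i => iff_of_eq (congrFun h i)
  | k+1, h, i => iff_of_eq (congrFun h.1 i)

lemma tle_step {A B : Kripke V} {a : A.World} {b : B.World} {a' : A.World} (k : ℕ)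
    (h : tle (n := n) (k+1) (wtype vec A (k+1) a) (wtype vec B (k+1) b))
    (hr : A.R a a') :
    ∃ b', B.R b b' ∧ tle k (wtype vec A k a') (wtype vec B k b') := by
  obtain ⟨v, hv, hle⟩ := h.2 (wtype vec A k a') ⟨a', hr, rfl⟩
  obtain ⟨b', hb', rfl⟩ := hv
  exact ⟨b', hb', hle⟩

noncomputable def chi0 (t : Fin n → Prop) : MF V :=
  listAnd (List.ofFn fun i => if t i then .var (vec i) else .neg (.var (vec i)))

noncomputable def chi : (k : ℕ) → TypeS n k → MF V
  | 0, t => chi0 vec t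
  | k+1, t => .and (chi0 vec t.1)
      (listAnd ((Finset.univ : Finset (TypeS n k)).toList.map
        fun u => if u ∈ t.2 then .dia (chi k u) else .top))

lemma chi0_ex (t : Fin n → Prop) : (chi0 vec t).IsExistential := by
  apply ex_listAnd; intro χ hχ
  rw [List.mem_ofFn] at hχ
  obtain ⟨i, rfl⟩ := hχ
  split
  · exact .var _
  · exact .negvar _

lemma chi0_depth (t : Fin n → Prop) : (chi0 vec t).depth = 0 := by
  refine Nat.le_antisymm ?_ (Nat.zero_le _)
  apply depth_listAnd; intro χ hχ
  rw [List.mem_ofFn] at hχ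
  obtain ⟨i, rfl⟩ := hχ
  split <;> simp [MF.depth]

lemma chi_ex : ∀ k (t : TypeS n k), (chi vec k t).IsExistential
  | 0, t => chi0_ex vec t
  | k+1, t => by
    refine .and (chi0_ex vec t.1) (ex_listAnd _ ?_)
    intro χ hχ
    simp only [List.mem_map] at hχ
    obtain ⟨u, _, rfl⟩ := hχ
    split
    · exact .dia (chi_ex k u)
    · exact .top

lemma chi_depth : ∀ k (t : TypeS n k), (chi vec k t).depth ≤ k
  | 0, t => le_of_eq (chi0_depth vec t)
  | k+1, t => by
    show max _ _ ≤ k + 1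
    refine max_le (by simp [chi0_depth]) (depth_listAnd _ _ ?_)
    intro χ hχ
    simp only [List.mem_map] at hχ
    obtain ⟨u, _, rfl⟩ := hχ
    split
    · exact Nat.add_le_add_right (chi_depth k u) 1
    · simp [MF.depth]

lemma sat_chi0 (A : Kripke V) (w : A.World) (t : Fin n → Prop) :
    Sat A w (chi0 vec t) ↔ ∀ i, t i ↔ A.val (vec i) w := by
  rw [chi0, sat_listAnd]
  constructor
  · intro h i
    have := h _ ((List.mem_ofFn).mpr ⟨i, rfl⟩)
    split at this
    · simp only [Sat] at this; tauto
    · simp only [Sat] at this; tauto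
  · intro h χ hχ
    rw [List.mem_ofFn] at hχ
    obtain ⟨i, rfl⟩ := hχ
    split
    next hti => exact (h i).1 hti
    next hti => exact fun hv => hti ((h i).2 hv)

lemma sat_chi (A : Kripke V) : ∀ k (t : TypeS n k) (w : A.World),
    Sat A w (chi vec k t) ↔ tle k t (wtype vec A k w)
  | 0, t, w => by
    rw [chi]; refine (sat_chi0 vec A w t).trans ?_
    show _ ↔ t = _
    constructor
    · intro h; funext i; exact propext (h i)
    · intro h i; rw [h]; exact Iff.rfl
  | k+1, t, w => by
    show Sat A w (.and _ _) ↔ _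
    simp only [Sat, sat_chi0, sat_listAnd]
    constructor
    · rintro ⟨h1, h2⟩
      refine ⟨funext fun i => propext (h1 i), ?_⟩
      intro u hu
      have := h2 _ (List.mem_map.mpr ⟨u, Finset.mem_toList.mpr (Finset.mem_univ u), rfl⟩)
      rw [if_pos hu] at this
      obtain ⟨x, hx, hsat⟩ := this
      exact ⟨wtype vec A k x, ⟨x, hx, rfl⟩, (sat_chi A k u x).mp hsat⟩
    · rintro ⟨h1, h2⟩
      refine ⟨fun i => iff_of_eq (congrFun h1 i), ?_⟩
      intro χ hχ
      simp only [List.mem_map] at hχ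
      obtain ⟨u, _, rfl⟩ := hχ
      split
      next hu =>
        obtain ⟨v, hv, hle⟩ := h2 u hu
        obtain ⟨x, hx, rfl⟩ := hv
        exact ⟨x, hx, (sat_chi A k u x).mpr hle⟩
      next => trivial

lemma sat_chi_self (A : Kripke V) (k : ℕ) (w : A.World) :
    Sat A w (chi vec k (wtype vec A k w)) :=
  (sat_chi vec A k _ w).mpr (tle_refl k _)

-- ===== models =====
lemma getLast?_cons_ne_nil {α : Type} (x : α) {l : List α} (h : l ≠ []) :
    (x :: l).getLast? = l.getLast? := by
  cases l with
  | nil => exact absurd rfl h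
  | cons a t => rw [List.getLast?_cons_cons]

section Models
variable (A B : Kripke V) (k : ℕ)

def UnravelR : Kripke V where
  World := { l : List A.World // l.getLast? = some A.pt ∧
    l.Chain' (fun x y => A.R y x) ∧ l.length ≤ k + 1 }
  R s t := ∃ x, t.val = x :: s.val
  val p s := ∃ a, s.val.head? = some a ∧ A.val p a
  pt := ⟨[A.pt], by simp, by simp [List.Chain'], by simp⟩

lemma unravel_sat : ∀ (ψ : MF V) (s : (UnravelR A k).World) (a : A.World),
    s.val.head? = some a → ψ.depth + s.val.length ≤ k + 1 →
    (Sat (UnravelR A k) s ψ ↔ Sat A a ψ)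
  | .top, s, a, hh, hd => Iff.rfl
  | .bot, s, a, hh, hd => Iff.rfl
  | .var p, s, a, hh, hd => by
    show (∃ a', s.val.head? = some a' ∧ A.val p a') ↔ A.val p a
    rw [hh]; simp
  | .neg ψ, s, a, hh, hd => by
    show ¬ _ ↔ ¬ _
    rw [unravel_sat ψ s a hh hd]
  | .and ψ χ, s, a, hh, hd => by
    show _ ∧ _ ↔ _ ∧ _
    have hd' : MF.depth ψ + s.val.length ≤ k + 1 ∧ MF.depth χ + s.val.length ≤ k + 1 := by
      constructor <;> [skip; skip] <;>
        exact le_trans (Nat.add_le_add_right (by simp [MF.depth]) _) hd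
    rw [unravel_sat ψ s a hh hd'.1, unravel_sat χ s a hh hd'.2]
  | .or ψ χ, s, a, hh, hd => by
    show _ ∨ _ ↔ _ ∨ _
    have hd' : MF.depth ψ + s.val.length ≤ k + 1 ∧ MF.depth χ + s.val.length ≤ k + 1 := by
      constructor <;> [skip; skip] <;>
        exact le_trans (Nat.add_le_add_right (by simp [MF.depth]) _) hd
    rw [unravel_sat ψ s a hh hd'.1, unravel_sat χ s a hh hd'.2]
  | .box ψ, s, a, hh, hd => by
    have h1 : MF.depth (MF.box ψ) = ψ.depth + 1 := rfl
    have hlen : s.val.length ≤ k := by omega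
    constructor
    · intro hs x hx
      have hne : s.val ≠ [] := by intro h; rw [h] at hh; simp at hh
      have hs' : (x :: s.val).getLast? = some A.pt := by
        rw [getLast?_cons_ne_nil _ hne]; exact s.prop.1
      have hchain : (x :: s.val).Chain' (fun u v => A.R v u) := by
        simp only [List.Chain', List.isChain_cons]
        exact ⟨fun y hy => by rw [hh] at hy; cases hy; exact hx, s.prop.2.1⟩
      have hlen' : (x :: s.val).length ≤ k + 1 := by simp only [List.length_cons]; omega
      let s' : (UnravelR A k).World := ⟨x :: s.val, hs', hchain, hlen'⟩
      have := hs s' ⟨x, rfl⟩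
      rw [unravel_sat ψ s' x rfl (by show ψ.depth + (x :: s.val).length ≤ k + 1; simp only [List.length_cons]; omega)] at this
      exact this
    · intro hs s' hr
      obtain ⟨x, hx⟩ := hr
      have hchain := s'.prop.2.1
      rw [hx] at hchain; simp only [List.Chain', List.isChain_cons] at hchain
      have hrel : A.R a x := by
        have := hchain.1 a (by rw [hh]; rfl)
        exact this
      have : Sat A x ψ := hs x hrel
      rw [unravel_sat ψ s' x (by rw [hx]; rfl) (by rw [hx]; simp only [List.length_cons]; omega)]
      exact this
  | .dia ψ, s, a, hh, hd => by
    have h1 : MF.depth (MF.dia ψ) = ψ.depth + 1 := rfl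
    have hlen : s.val.length ≤ k := by omega
    constructor
    · intro hs
      obtain ⟨s', hr, hsat⟩ := hs
      obtain ⟨x, hx⟩ := hr
      have hchain := s'.prop.2.1
      rw [hx] at hchain; simp only [List.Chain', List.isChain_cons] at hchain
      have hrel : A.R a x := hchain.1 a (by rw [hh]; rfl)
      rw [unravel_sat ψ s' x (by rw [hx]; rfl) (by rw [hx]; simp only [List.length_cons]; omega)] at hsat
      exact ⟨x, hrel, hsat⟩
    · intro hs
      obtain ⟨x, hx, hsat⟩ := hs
      have hne : s.val ≠ [] := by intro h; rw [h] at hh; simp at hh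
      have hs' : (x :: s.val).getLast? = some A.pt := by
        rw [getLast?_cons_ne_nil _ hne]; exact s.prop.1
      have hchain : (x :: s.val).Chain' (fun u v => A.R v u) := by
        simp only [List.Chain', List.isChain_cons]
        exact ⟨fun y hy => by rw [hh] at hy; cases hy; exact hx, s.prop.2.1⟩
      let s' : (UnravelR A k).World := ⟨x :: s.val, hs', hchain, by simp only [List.length_cons]; omega⟩
      refine ⟨s', ⟨x, rfl⟩, ?_⟩
      rw [unravel_sat ψ s' x rfl (by show ψ.depth + (x :: s.val).length ≤ k + 1; simp only [List.length_cons]; omega)]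
      exact hsat

end Models
-- ===== the amalgam model C =====
section CModel
variable (A B : Kripke V) (k : ℕ)

def Rc : (Option A.World × B.World) → (Option A.World × B.World) → Prop :=
  fun x y => B.R y.2 x.2 ∧ ∀ a', x.1 = some a' → ∃ a0, y.1 = some a0 ∧ A.R a0 a'

variable {n : ℕ} (vec : Fin n → V)

def GoodL (q : List (Option A.World × B.World)) : Prop :=
  ∀ x ∈ q, ∀ a, x.1 = some a → ∀ i : Fin n, (A.val (vec i) a ↔ B.val (vec i) x.2)

def CM (h0 : ∀ i : Fin n, (A.val (vec i) A.pt ↔ B.val (vec i) B.pt)) : Kripke V where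
  World := { q : List (Option A.World × B.World) //
    q.getLast? = some (some A.pt, B.pt) ∧ q.Chain' (Rc A B) ∧ q.length ≤ k + 1 ∧
      GoodL A B vec q }
  R s t := ∃ x, t.val = x :: s.val
  val p s := ∃ x, s.val.head? = some x ∧
    ((∃ a, x.1 = some a ∧ A.val p a) ∨ (x.1 = none ∧ B.val p x.2))
  pt := ⟨[(some A.pt, B.pt)], by simp, by simp [List.Chain'], by simp, by
    intro x hx a ha i
    simp only [List.mem_singleton] at hx
    subst hx
    simp only [Option.some.injEq] at ha
    subst ha
    exact h0 i⟩

variable (h0 : ∀ i : Fin n, (A.val (vec i) A.pt ↔ B.val (vec i) B.pt))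

lemma cm_sat : ∀ (ψ : MF V), (∀ p ∈ MF.varsL ψ, ∃ i, vec i = p) →
    ∀ (q : (CM A B k vec h0).World) (x : Option A.World × B.World),
    q.val.head? = some x → ψ.depth + q.val.length ≤ k + 1 →
    (Sat (CM A B k vec h0) q ψ ↔ Sat B x.2 ψ)
  | .top, hv, q, x, hh, hd => Iff.rfl
  | .bot, hv, q, x, hh, hd => Iff.rfl
  | .var p, hv, q, x, hh, hd => by
    obtain ⟨i, rfl⟩ := hv p (by simp [MF.varsL])
    show (∃ y, q.val.head? = some y ∧
      ((∃ a, y.1 = some a ∧ A.val (vec i) a) ∨ (y.1 = none ∧ B.val (vec i) y.2)))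
      ↔ B.val (vec i) x.2
    rw [hh]
    simp only [Option.some.injEq, exists_eq_left']
    constructor
    · rintro (⟨a, ha, hva⟩ | ⟨_, hvb⟩)
      · exact (q.prop.2.2.2 x (List.mem_of_mem_head? (by rw [hh]; rfl)) a ha i).mp hva
      · exact hvb
    · intro hb
      cases hx1 : x.1 with
      | none => exact Or.inr ⟨rfl, hb⟩
      | some a =>
        exact Or.inl ⟨a, rfl,
          (q.prop.2.2.2 x (List.mem_of_mem_head? (by rw [hh]; rfl)) a hx1 i).mpr hb⟩
  | .neg ψ, hv, q, x, hh, hd => by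
    show ¬ _ ↔ ¬ _
    rw [cm_sat ψ hv q x hh hd]
  | .and ψ χ, hv, q, x, hh, hd => by
    show _ ∧ _ ↔ _ ∧ _
    have hv1 : ∀ p ∈ MF.varsL ψ, ∃ i, vec i = p := fun p hp =>
      hv p (by simp only [MF.varsL, List.mem_append]; exact Or.inl hp)
    have hv2 : ∀ p ∈ MF.varsL χ, ∃ i, vec i = p := fun p hp =>
      hv p (by simp only [MF.varsL, List.mem_append]; exact Or.inr hp)
    have hd1 : MF.depth ψ + q.val.length ≤ k + 1 :=
      le_trans (Nat.add_le_add_right (by simp [MF.depth]) _) hd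
    have hd2 : MF.depth χ + q.val.length ≤ k + 1 :=
      le_trans (Nat.add_le_add_right (by simp [MF.depth]) _) hd
    rw [cm_sat ψ hv1 q x hh hd1, cm_sat χ hv2 q x hh hd2]
  | .or ψ χ, hv, q, x, hh, hd => by
    show _ ∨ _ ↔ _ ∨ _
    have hv1 : ∀ p ∈ MF.varsL ψ, ∃ i, vec i = p := fun p hp =>
      hv p (by simp only [MF.varsL, List.mem_append]; exact Or.inl hp)
    have hv2 : ∀ p ∈ MF.varsL χ, ∃ i, vec i = p := fun p hp =>
      hv p (by simp only [MF.varsL, List.mem_append]; exact Or.inr hp)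
    have hd1 : MF.depth ψ + q.val.length ≤ k + 1 :=
      le_trans (Nat.add_le_add_right (by simp [MF.depth]) _) hd
    have hd2 : MF.depth χ + q.val.length ≤ k + 1 :=
      le_trans (Nat.add_le_add_right (by simp [MF.depth]) _) hd
    rw [cm_sat ψ hv1 q x hh hd1, cm_sat χ hv2 q x hh hd2]
  | .box ψ, hv, q, x, hh, hd => by
    have hv' : ∀ p ∈ MF.varsL ψ, ∃ i, vec i = p := fun p hp => hv p hp
    have h1 : MF.depth (MF.box ψ) = ψ.depth + 1 := rfl
    have hlen : q.val.length ≤ k := by omega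
    have hne : q.val ≠ [] := by
      intro h; rw [h] at hh; simp at hh
    constructor
    · intro hs b' hb'
      have hql : ((⟨none, b'⟩ :: q.val) : List _).getLast? = some (some A.pt, B.pt) := by
        rw [getLast?_cons_ne_nil _ hne]; exact q.prop.1
      have hqc : ((⟨none, b'⟩ :: q.val) : List _).Chain' (Rc A B) := by
        simp only [List.Chain', List.isChain_cons]
        refine ⟨fun y hy => ?_, q.prop.2.1⟩
        rw [hh] at hy; cases hy
        exact ⟨hb', fun a' ha' => by simp at ha'⟩
      have hqg : GoodL A B vec ((⟨none, b'⟩ :: q.val) : List _) := by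
        intro z hz a ha i
        rcases List.mem_cons.mp hz with rfl | hz
        · simp at ha
        · exact q.prop.2.2.2 z hz a ha i
      let q' : (CM A B k vec h0).World :=
        ⟨(none, b') :: q.val, hql, hqc, by simp only [List.length_cons]; omega, hqg⟩
      have := hs q' ⟨(none, b'), rfl⟩
      rw [cm_sat ψ hv' q' (none, b') rfl (by show ψ.depth + ((none, b') :: q.val).length ≤ k + 1; simp only [List.length_cons]; omega)] at this
      exact this
    · intro hs q' hr
      obtain ⟨y, hy⟩ := hr
      have hchain := q'.prop.2.1
      rw [hy] at hchain; simp only [List.Chain', List.isChain_cons] at hchain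
      have hrel : B.R x.2 y.2 := (hchain.1 x (by rw [hh]; rfl)).1
      rw [cm_sat ψ hv' q' y (by rw [hy]; rfl)
        (by rw [hy]; simp only [List.length_cons]; omega)]
      exact hs y.2 hrel
  | .dia ψ, hv, q, x, hh, hd => by
    have hv' : ∀ p ∈ MF.varsL ψ, ∃ i, vec i = p := fun p hp => hv p hp
    have h1 : MF.depth (MF.dia ψ) = ψ.depth + 1 := rfl
    have hlen : q.val.length ≤ k := by omega
    have hne : q.val ≠ [] := by
      intro h; rw [h] at hh; simp at hh
    constructor
    · intro hs
      obtain ⟨q', hr, hsat⟩ := hs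
      obtain ⟨y, hy⟩ := hr
      have hchain := q'.prop.2.1
      rw [hy] at hchain; simp only [List.Chain', List.isChain_cons] at hchain
      have hrel : B.R x.2 y.2 := (hchain.1 x (by rw [hh]; rfl)).1
      rw [cm_sat ψ hv' q' y (by rw [hy]; rfl)
        (by rw [hy]; simp only [List.length_cons]; omega)] at hsat
      exact ⟨y.2, hrel, hsat⟩
    · intro hs
      obtain ⟨b', hb', hsat⟩ := hs
      have hql : ((⟨none, b'⟩ :: q.val) : List _).getLast? = some (some A.pt, B.pt) := by
        rw [getLast?_cons_ne_nil _ hne]; exact q.prop.1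
      have hqc : ((⟨none, b'⟩ :: q.val) : List _).Chain' (Rc A B) := by
        simp only [List.Chain', List.isChain_cons]
        refine ⟨fun y hy => ?_, q.prop.2.1⟩
        rw [hh] at hy; cases hy
        exact ⟨hb', fun a' ha' => by simp at ha'⟩
      have hqg : GoodL A B vec ((⟨none, b'⟩ :: q.val) : List _) := by
        intro z hz a ha i
        rcases List.mem_cons.mp hz with rfl | hz
        · simp at ha
        · exact q.prop.2.2.2 z hz a ha i
      let q' : (CM A B k vec h0).World :=
        ⟨(none, b') :: q.val, hql, hqc, by simp only [List.length_cons]; omega, hqg⟩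
      refine ⟨q', ⟨(none, b'), rfl⟩, ?_⟩
      rw [cm_sat ψ hv' q' (none, b') rfl (by show ψ.depth + ((none, b') :: q.val).length ≤ k + 1; simp only [List.length_cons]; omega)]
      exact hsat

end CModel
-- ===== decoration and embedding =====
section Emb
variable (A B : Kripke V) {n : ℕ} (vec : Fin n → V) (k : ℕ)

noncomputable def pick (j : ℕ) (a' : A.World) (b : B.World) : B.World :=
  if h : ∃ b', B.R b b' ∧ tle (n := n) j (wtype vec A j a') (wtype vec B j b')
  then h.choose else B.pt

lemma pick_spec (j : ℕ) (a' : A.World) (b : B.World)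
    (h : ∃ b', B.R b b' ∧ tle (n := n) j (wtype vec A j a') (wtype vec B j b')) :
    B.R b (pick A B vec j a' b) ∧
      tle j (wtype vec A j a') (wtype vec B j (pick A B vec j a' b)) := by
  rw [pick, dif_pos h]; exact h.choose_spec

def bhead (m : List (Option A.World × B.World)) : B.World :=
  (m.head?.map Prod.snd).getD B.pt

noncomputable def decorate : List A.World → List (Option A.World × B.World)
  | [] => []
  | [a] => [(some a, B.pt)]
  | a' :: a :: rest =>
    (some a', pick A B vec (k - (rest.length + 1)) a'
      (bhead A B (decorate (a :: rest)))) :: decorate (a :: rest)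

lemma decorate_fst : ∀ l, (decorate A B vec k l).map Prod.fst = l.map some
  | [] => rfl
  | [a] => rfl
  | a' :: a :: rest => by
    show some a' :: (decorate A B vec k (a :: rest)).map Prod.fst = some a' :: _
    rw [decorate_fst (a :: rest)]

lemma decorate_ne_nil {l : List A.World} (h : l ≠ []) : decorate A B vec k l ≠ [] := by
  intro hd
  apply h
  have := decorate_fst A B vec k l
  rw [hd] at this
  cases l with
  | nil => rfl
  | cons a t => simp at this

lemma decorate_head : ∀ (a : A.World) (rest : List A.World),
    ∃ x, (decorate A B vec k (a :: rest)).head? = some x ∧ x.1 = some a ∧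
      x.2 = bhead A B (decorate A B vec k (a :: rest))
  | a, [] => ⟨(some a, B.pt), rfl, rfl, rfl⟩
  | a, r :: rs => ⟨_, rfl, rfl, rfl⟩

lemma decorate_inv (hle : tle k (wtype vec A k A.pt) (wtype vec B k B.pt)) :
    ∀ (l : List A.World), l.getLast? = some A.pt →
      l.Chain' (fun x y => A.R y x) → l.length ≤ k + 1 →
      (∀ j, l.length + j = k + 1 → ∀ a, l.head? = some a →
        tle j (wtype vec A j a) (wtype vec B j (bhead A B (decorate A B vec k l)))) ∧
      (decorate A B vec k l).getLast? = some (some A.pt, B.pt) ∧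
      (decorate A B vec k l).Chain' (Rc A B) ∧
      GoodL A B vec (decorate A B vec k l)
  | [] => fun hlast _ _ => by simp at hlast
  | [a] => fun hlast _ _ => by
    simp only [List.getLast?_singleton, Option.some.injEq] at hlast
    subst hlast
    refine ⟨?_, rfl, by show List.Chain' (Rc A B) [(some A.pt, B.pt)]; simp [List.Chain'], ?_⟩
    · intro j hj a' ha'
      obtain rfl : j = k := by simp only [List.length_cons, List.length_nil] at hj; omega
      simp only [List.head?_cons, Option.some.injEq] at ha'
      subst ha'
      exact hle
    · intro x hx a0 ha0 i
      have : x = (some A.pt, B.pt) := by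
        have : decorate A B vec k [A.pt] = [(some A.pt, B.pt)] := rfl
        rw [this] at hx
        simpa using hx
      subst this
      simp only [Option.some.injEq] at ha0
      subst ha0
      exact tle_val vec k hle i
  | a' :: a0 :: rest => fun hlast hchain hlen => by
    have hchain' := (List.isChain_cons_cons.mp hchain)
    have hr : A.R a0 a' := hchain'.1
    have hlast' : (a0 :: rest).getLast? = some A.pt := by
      rw [List.getLast?_cons_cons] at hlast; exact hlast
    have hlen' : (a0 :: rest).length ≤ k + 1 := by
      simp only [List.length_cons] at hlen ⊢; omega
    obtain ⟨IH1, IH2, IH3, IH4⟩ :=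
      decorate_inv hle (a0 :: rest) hlast' hchain'.2 hlen'
    -- the new node
    have hdec : decorate A B vec k (a' :: a0 :: rest) =
        (some a', pick A B vec (k - (rest.length + 1)) a'
          (bhead A B (decorate A B vec k (a0 :: rest)))) ::
        decorate A B vec k (a0 :: rest) := rfl
    obtain ⟨x, hxh, hx1, hx2⟩ := decorate_head A B vec k a0 rest
    constructor
    · intro j hj a ha
      simp only [List.head?_cons, Option.some.injEq] at ha
      subst ha
      simp only [List.length_cons] at hj
      have hidx : k - (rest.length + 1) = j := by omega
      have hstep := tle_step vec j
        (by
          have := IH1 (j+1) (by simp only [List.length_cons]; omega) a0 rfl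
          exact this) hr
      have := (pick_spec A B vec j a' (bhead A B (decorate A B vec k (a0 :: rest))) hstep).2
      rw [hdec]
      show tle j _ (wtype vec B j (bhead A B _))
      have hbh : bhead A B ((some a', pick A B vec (k - (rest.length + 1)) a'
          (bhead A B (decorate A B vec k (a0 :: rest)))) ::
          decorate A B vec k (a0 :: rest)) =
          pick A B vec (k - (rest.length + 1)) a'
            (bhead A B (decorate A B vec k (a0 :: rest))) := rfl
      rw [hbh, hidx]
      exact this
    refine ⟨?_, ?_, ?_⟩
    · rw [hdec, getLast?_cons_ne_nil _ (decorate_ne_nil A B vec k (by simp))]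
      exact IH2
    · rw [hdec]; simp only [List.Chain', List.isChain_cons]
      refine ⟨?_, IH3⟩
      intro y hy
      rw [hxh] at hy
      cases hy
      constructor
      · rw [hx2]
        have hj' : rest.length + 1 ≤ k := by
          simp only [List.length_cons] at hlen; omega
        refine (pick_spec A B vec _ a' _ ?_).1
        exact tle_step vec _ (by
          have := IH1 (k - (rest.length + 1) + 1)
            (by simp only [List.length_cons]; omega) a0 rfl
          exact this) hr
      · intro a'' ha''
        simp only [Option.some.injEq] at ha''
        subst ha''
        exact ⟨a0, hx1, hr⟩
    · rw [hdec]
      intro z hz a ha i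
      rcases List.mem_cons.mp hz with rfl | hz
      · simp only [Option.some.injEq] at ha
        subst ha
        have hj' : rest.length + 1 ≤ k := by
          simp only [List.length_cons] at hlen; omega
        have hstep := tle_step vec (k - (rest.length + 1))
          (by
            have := IH1 (k - (rest.length + 1) + 1)
              (by simp only [List.length_cons]; omega) a0 rfl
            exact this) hr
        exact tle_val vec _ ((pick_spec A B vec _ a' _ hstep).2) i
      · exact IH4 z hz a ha i

end Emb
-- ===== main transfer lemma =====
section Main
variable {n : ℕ}

lemma main_lemma (A B : Kripke V) (vec : Fin n → V) (k : ℕ) (φ : MF V)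
    (hφd : φ.depth ≤ k)
    (hvars : ∀ p ∈ MF.varsL φ, ∃ i, vec i = p)
    (hpres : ∀ (A' B' : Kripke V) (f : KHom A' B'), f.IsEmbedding →
      Sat A' A'.pt φ → Sat B' B'.pt φ)
    (hle : tle k (wtype vec A k A.pt) (wtype vec B k B.pt))
    (hsat : Sat A A.pt φ) : Sat B B.pt φ := by
  have h0 : ∀ i, A.val (vec i) A.pt ↔ B.val (vec i) B.pt := tle_val vec k hle
  -- properties of decorate on unravelled worlds
  have hlen : ∀ (l : List A.World), (decorate A B vec k l).length = l.length := by
    intro l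
    have := congrArg List.length (decorate_fst A B vec k l)
    simpa using this
  have hprops : ∀ (s : (UnravelR A k).World),
      (decorate A B vec k s.val).getLast? = some (some A.pt, B.pt) ∧
      (decorate A B vec k s.val).Chain' (Rc A B) ∧
      (decorate A B vec k s.val).length ≤ k + 1 ∧
      GoodL A B vec (decorate A B vec k s.val) := by
    intro s
    obtain ⟨h1, h2, h3, h4⟩ := decorate_inv A B vec k hle s.val s.prop.1 s.prop.2.1 s.prop.2.2
    exact ⟨h2, h3, by rw [hlen]; exact s.prop.2.2, h4⟩
  let f : KHom (UnravelR A k) (CM A B k vec h0) :=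
    { toFun := fun s => ⟨decorate A B vec k s.val, (hprops s).1, (hprops s).2.1,
        (hprops s).2.2.1, (hprops s).2.2.2⟩
      map_rel := by
        intro s t hst
        obtain ⟨x, hx⟩ := hst
        have hne : s.val ≠ [] := by
          intro h; rw [h] at hx
          have := s.prop.1
          rw [h] at this; simp at this
        obtain ⟨a, rest, hsv⟩ : ∃ a rest, s.val = a :: rest := by
          cases hs : s.val with
          | nil => exact absurd hs hne
          | cons a rest => exact ⟨a, rest, rfl⟩
        show ∃ y, decorate A B vec k t.val = y :: decorate A B vec k s.val
        rw [hx, hsv]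
        exact ⟨_, rfl⟩
      map_val := by
        intro p s hv
        obtain ⟨a, hh, hva⟩ := hv
        obtain ⟨a', rest, hsv⟩ : ∃ a' rest, s.val = a' :: rest := by
          cases hs : s.val with
          | nil => rw [hs] at hh; simp at hh
          | cons a' rest => exact ⟨a', rest, rfl⟩
        rw [hsv] at hh
        simp only [List.head?_cons, Option.some.injEq] at hh
        subst hh
        obtain ⟨x, hxh, hx1, _⟩ := decorate_head A B vec k a' rest
        refine ⟨x, ?_, Or.inl ⟨a', hx1, hva⟩⟩
        show (decorate A B vec k s.val).head? = some x
        rw [hsv]; exact hxh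
      map_pt := by
        apply Subtype.ext
        rfl }
  have hemb : f.IsEmbedding := by
    refine ⟨?_, ?_, ?_⟩
    · intro s t hst
      apply Subtype.ext
      have : decorate A B vec k s.val = decorate A B vec k t.val :=
        congrArg Subtype.val hst
      have hm : s.val.map some = t.val.map some := by
        rw [← decorate_fst A B vec k, ← decorate_fst A B vec k, this]
      exact List.map_injective_iff.mpr (Option.some_injective _) hm
    · intro p s hv
      obtain ⟨x, hxh, hdisj⟩ := hv
      obtain ⟨a', rest, hsv⟩ : ∃ a' rest, s.val = a' :: rest := by
        cases hs : s.val with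
        | nil =>
          have := s.prop.1; rw [hs] at this; simp at this
        | cons a' rest => exact ⟨a', rest, rfl⟩
      obtain ⟨x', hxh', hx1', _⟩ := decorate_head A B vec k a' rest
      have hxx : x = x' := by
        have h1 : (decorate A B vec k s.val).head? = some x := hxh
        rw [hsv] at h1
        rw [h1] at hxh'
        exact Option.some.inj hxh'
      have hx1 : x.1 = some a' := by rw [hxx]; exact hx1'
      rcases hdisj with ⟨a, ha, hva⟩ | ⟨hnone, _⟩
      · refine ⟨a', by rw [hsv]; rfl, ?_⟩
        have haa : a = a' := by
          rw [hx1] at ha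
          exact (Option.some.inj ha).symm
        rw [← haa]
        exact hva
      · rw [hnone] at hx1
        simp at hx1
    · intro s t hst
      obtain ⟨y, hy⟩ := hst
      have hy' : decorate A B vec k t.val = y :: decorate A B vec k s.val := hy
      have hm : t.val.map some = y.1 :: s.val.map some := by
        rw [← decorate_fst A B vec k, ← decorate_fst A B vec k, hy', List.map_cons]
      obtain ⟨a, t', ht⟩ : ∃ a t', t.val = a :: t' := by
        cases hs : t.val with
        | nil => rw [hs] at hm; simp at hm
        | cons a t' => exact ⟨a, t', rfl⟩
      rw [ht, List.map_cons] at hm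
      injection hm with hm1 hm2
      have h3 : t' = s.val := List.map_injective_iff.mpr (Option.some_injective _) hm2
      exact ⟨a, by rw [ht, h3]⟩
  -- transfer
  have hA' : Sat (UnravelR A k) (UnravelR A k).pt φ := by
    rw [unravel_sat A k φ (UnravelR A k).pt A.pt rfl
      (by show φ.depth + 1 ≤ k + 1; omega)]
    exact hsat
  have hC : Sat (CM A B k vec h0) (CM A B k vec h0).pt φ :=
    hpres _ _ f hemb hA'
  rw [cm_sat A B k vec h0 φ hvars (CM A B k vec h0).pt (some A.pt, B.pt) rfl
    (by show φ.depth + 1 ≤ k + 1; omega)] at hC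
  exact hC

end Main
-- ===== preservation of existential formulas =====
lemma ex_preserved {A B : Kripke V} (f : KHom A B) (hpw : f.Pathwise) :
    ∀ {ψ : MF V}, ψ.IsExistential → ∀ w, Sat A w ψ → Sat B (f.toFun w) ψ := by
  intro ψ hex
  induction hex with
  | top => intro w _; trivial
  | bot => intro w h; exact h.elim
  | var p => intro w h; exact f.map_val p w h
  | negvar p => intro w h hb; exact h (hpw p w hb)
  | and h1 h2 ih1 ih2 => intro w h; exact ⟨ih1 w h.1, ih2 w h.2⟩
  | or h1 h2 ih1 ih2 =>
    intro w h
    rcases h with h | h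
    · exact Or.inl (ih1 w h)
    · exact Or.inr (ih2 w h)
  | dia h ih =>
    intro w hw
    obtain ⟨x, hx, hs⟩ := hw
    exact ⟨f.toFun x, f.map_rel _ _ hx, ih x hs⟩

end LT


/-- Łoś–Tarski theorem for modal logic: a modal formula of depth at
most `k` is preserved under embeddings of Kripke models iff it is logically
equivalent to an existential modal formula of depth at most `k`. -/
theorem stmt17 {V : Type} (k : ℕ) (φ : MF V) (hφ : φ.depth ≤ k) :
    (∀ (A B : Kripke V) (f : KHom A B), f.IsEmbedding → Sat A A.pt φ → Sat B B.pt φ)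
    ↔ ∃ ψ : MF V, ψ.IsExistential ∧ ψ.depth ≤ k ∧
        ∀ M : Kripke V, Sat M M.pt φ ↔ Sat M M.pt ψ := by
  constructor
  · intro hpres
    classical
    set n := (LT.MF.varsL φ).length with hn
    set vec : Fin n → V := fun i => (LT.MF.varsL φ).get i with hvec
    have hvars : ∀ p ∈ LT.MF.varsL φ, ∃ i, vec i = p := by
      intro p hp
      obtain ⟨i, hi⟩ := List.get_of_mem hp
      exact ⟨i, hi⟩
    set S : Set (LT.TypeS n k) :=
      { t | ∃ M : Kripke V, Sat M M.pt φ ∧ LT.wtype vec M k M.pt = t } with hS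
    refine ⟨LT.listOr ((Finset.univ.filter (· ∈ S)).toList.map (LT.chi vec k)),
      ?_, ?_, ?_⟩
    · apply LT.ex_listOr
      intro χ hχ
      simp only [List.mem_map] at hχ
      obtain ⟨t, _, rfl⟩ := hχ
      exact LT.chi_ex vec k t
    · apply LT.depth_listOr
      intro χ hχ
      simp only [List.mem_map] at hχ
      obtain ⟨t, _, rfl⟩ := hχ
      exact LT.chi_depth vec k t
    · intro M
      constructor
      · intro hM
        rw [LT.sat_listOr]
        refine ⟨LT.chi vec k (LT.wtype vec M k M.pt), ?_, LT.sat_chi_self vec M k M.pt⟩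
        apply List.mem_map.mpr
        refine ⟨_, ?_, rfl⟩
        rw [Finset.mem_toList, Finset.mem_filter]
        exact ⟨Finset.mem_univ _, ⟨M, hM, rfl⟩⟩
      · intro hM
        rw [LT.sat_listOr] at hM
        obtain ⟨χ, hmem, hsatχ⟩ := hM
        simp only [List.mem_map, Finset.mem_toList, Finset.mem_filter] at hmem
        obtain ⟨t, ⟨_, hts⟩, rfl⟩ := hmem
        obtain ⟨M₀, hM₀, rfl⟩ := hts
        have hle := (LT.sat_chi vec M k _ M.pt).mp hsatχ
        exact LT.main_lemma M₀ M vec k φ hφ hvars hpres hle hM₀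
  · rintro ⟨ψ, hex, _, hiff⟩ A B f hf hsat
    have h1 : Sat A A.pt ψ := (hiff A).mp hsat
    have h2 : Sat B (f.toFun A.pt) ψ := LT.ex_preserved f hf.2.1 hex A.pt h1
    rw [f.map_pt] at h2
    exact (hiff B).mpr h2
end
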